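/- Let H be a finite-dimensional complex Hilbert space, let A, B ∈ B(H) be invertible, and let V be an operator in B(H) such that |⟨Vx, y⟩| ≤ ‖Ax‖·‖By‖ for all x, y ∈ H. Then for every operator T ∈ B(H) one has |Tr(VT)| ≤ ‖ATB*‖₁. -/

import Mathlib

open ContinuousLinearMap

/-- The trace-class norm `‖S‖₁ = Tr((S*S)^{1/2})`. -/
noncomputable def traceNorm {H : Type*} [NormedAddCommGroup H] [InnerProductSpace ℂ H]
    [FiniteDimensional ℂ H] (S : H →L[ℂ] H) : ℝ :=
  (LinearMap.trace ℂ H (CFC.sqrt (adjoint S * S) : H →L[ℂ] H).toLinearMap).re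

lemma trace_eq_sum_inner' {H : Type*} [NormedAddCommGroup H] [InnerProductSpace ℂ H]
    [FiniteDimensional ℂ H] {ι : Type*} [Fintype ι] [DecidableEq ι]
    (b : OrthonormalBasis ι ℂ H) (f : H →L[ℂ] H) :
    LinearMap.trace ℂ H f.toLinearMap = ∑ i, (inner ℂ (b i) (f (b i)) : ℂ) := by
  rw [LinearMap.trace_eq_matrix_trace ℂ b.toBasis, Matrix.trace]
  congr 1
  ext i
  simp [Matrix.diag, LinearMap.toMatrix_apply, OrthonormalBasis.coe_toBasis_repr_apply,
    OrthonormalBasis.repr_apply_apply]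

lemma key_lemma {H : Type*} [NormedAddCommGroup H] [InnerProductSpace ℂ H]
    [FiniteDimensional ℂ H] (C S : H →L[ℂ] H) (hC : ‖C‖ ≤ 1) :
    ‖LinearMap.trace ℂ H ((C * S) : H →L[ℂ] H).toLinearMap‖ ≤ traceNorm S := by
  set P : H →L[ℂ] H := CFC.sqrt (adjoint S * S) with hPdef
  have hpos : (0 : H →L[ℂ] H) ≤ adjoint S * S := by
    rw [← star_eq_adjoint]; exact star_mul_self_nonneg S
  have hP : (0 : H →L[ℂ] H) ≤ P := CFC.sqrt_nonneg _
  have hPpos : P.IsPositive := (nonneg_iff_isPositive P).mp hP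
  have hsym : (P.toLinearMap).IsSymmetric :=
    hPpos.1
  have hsq : P * P = adjoint S * S := by
    have := CFC.sq_sqrt (adjoint S * S) hpos
    rwa [sq] at this
  set n := Module.finrank ℂ H with hn
  set b := hsym.eigenvectorBasis hn.symm with hb
  set μ := hsym.eigenvalues hn.symm with hμ
  have happ : ∀ i, P (b i) = (μ i : ℂ) • b i := fun i =>
    hsym.apply_eigenvectorBasis hn.symm i
  have hμnn : ∀ i, 0 ≤ μ i := by
    intro i
    have h1 := hPpos.inner_nonneg_left (b i)
    have h2 : (inner ℂ (P (b i)) (b i) : ℂ) = (μ i : ℂ) := by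
      rw [happ i, inner_smul_left]
      simp [inner_self_eq_norm_sq_to_K, b.orthonormal.1 i]
    rw [h2] at h1
    simpa using h1
  have hnormS : ∀ i, ‖S (b i)‖ = μ i := by
    intro i
    have h1 : (inner ℂ (S (b i)) (S (b i)) : ℂ) = (μ i : ℂ) ^ 2 := by
      rw [← adjoint_inner_left]
      have e1 : adjoint S (S (b i)) = (adjoint S * S) (b i) := rfl
      rw [e1, ← hsq]
      have e2 : (P * P) (b i) = P (P (b i)) := rfl
      rw [e2, happ i, map_smul, happ i, smul_smul, inner_smul_left]
      simp [inner_self_eq_norm_sq_to_K, b.orthonormal.1 i, ← Complex.ofReal_mul, sq]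
    rw [inner_self_eq_norm_sq_to_K] at h1
    have h3 : ‖S (b i)‖ ^ 2 = μ i ^ 2 :=
      RCLike.ofReal_injective (K := ℂ)
        (by rw [RCLike.ofReal_pow, RCLike.ofReal_pow]; exact h1)
    have h4 := congrArg Real.sqrt h3
    rwa [Real.sqrt_sq (norm_nonneg _), Real.sqrt_sq (hμnn i)] at h4
  have htraceP : traceNorm S = ∑ i, μ i := by
    rw [traceNorm, ← hPdef, trace_eq_sum_inner' b]
    have e : ∀ i, (inner ℂ (b i) (P (b i)) : ℂ) = (μ i : ℂ) := by
      intro i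
      rw [happ i, inner_smul_right]
      simp [inner_self_eq_norm_sq_to_K, b.orthonormal.1 i]
    simp [e]
  rw [htraceP, trace_eq_sum_inner' b]
  calc ‖∑ i, (inner ℂ (b i) ((C * S) (b i)) : ℂ)‖
      ≤ ∑ i, ‖(inner ℂ (b i) ((C * S) (b i)) : ℂ)‖ := norm_sum_le _ _
    _ ≤ ∑ i, μ i := by
        apply Finset.sum_le_sum
        intro i _
        have hb1 : ‖b i‖ = 1 := b.orthonormal.1 i
        have h2 : ‖(C * S) (b i)‖ ≤ ‖C‖ * ‖S (b i)‖ := by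
          have e : (C * S) (b i) = C (S (b i)) := rfl
          rw [e]; exact C.le_opNorm _
        calc ‖(inner ℂ (b i) ((C * S) (b i)) : ℂ)‖
            ≤ ‖b i‖ * ‖(C * S) (b i)‖ := norm_inner_le_norm _ _
          _ = ‖(C * S) (b i)‖ := by rw [hb1, one_mul]
          _ ≤ ‖C‖ * ‖S (b i)‖ := h2
          _ ≤ 1 * ‖S (b i)‖ := mul_le_mul_of_nonneg_right hC (norm_nonneg _)
          _ = μ i := by rw [one_mul, hnormS i]

/-- If `A, B ∈ B(H)` are invertible and `V ∈ B(H)` satisfies `|⟨Vx,y⟩| ≤ ‖Ax‖‖By‖`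
for all `x, y`, then `|Tr(VT)| ≤ ‖ATB*‖₁` for every `T ∈ B(H)`. -/
theorem abs_trace_le_traceNorm
    {H : Type*} [NormedAddCommGroup H] [InnerProductSpace ℂ H] [FiniteDimensional ℂ H]
    (A B V : H →L[ℂ] H) (hA : IsUnit A) (hB : IsUnit B)
    (hV : ∀ x y : H, ‖(inner ℂ (V x) y : ℂ)‖ ≤ ‖A x‖ * ‖B y‖)
    (T : H →L[ℂ] H) :
    ‖LinearMap.trace ℂ H ((V * T) : H →L[ℂ] H).toLinearMap‖ ≤
      traceNorm (A * T * adjoint B) := by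
  set Ai : H →L[ℂ] H := ↑hA.unit⁻¹ with hAi
  set Bi : H →L[ℂ] H := ↑hB.unit⁻¹ with hBi
  have hAAi : A * Ai = 1 := by
    have h := hA.unit.mul_inv
    rwa [hA.unit_spec] at h
  have hAiA : Ai * A = 1 := by
    have h := hA.unit.inv_mul
    rwa [hA.unit_spec] at h
  have hBBi : B * Bi = 1 := by
    have h := hB.unit.mul_inv
    rwa [hB.unit_spec] at h
  have hBiB : Bi * B = 1 := by
    have h := hB.unit.inv_mul
    rwa [hB.unit_spec] at h
  set C : H →L[ℂ] H := adjoint Bi * V * Ai with hC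
  have hCinner : ∀ u w : H, ‖(inner ℂ (C u) w : ℂ)‖ ≤ ‖u‖ * ‖w‖ := by
    intro u w
    have h1 : C u = adjoint Bi (V (Ai u)) := rfl
    rw [h1, adjoint_inner_left]
    have h2 := hV (Ai u) (Bi w)
    have hAu : A (Ai u) = u := by
      have e : (A * Ai) u = u := by rw [hAAi]; rfl
      simpa using e
    have hBw : B (Bi w) = w := by
      have e : (B * Bi) w = w := by rw [hBBi]; rfl
      simpa using e
    rwa [hAu, hBw] at h2
  have hCnorm : ‖C‖ ≤ 1 := by
    apply opNorm_le_bound _ zero_le_one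
    intro u
    rw [one_mul]
    rcases eq_or_ne (C u) 0 with h | h
    · simp [h]
    · have h1 : ‖C u‖ ^ 2 ≤ ‖u‖ * ‖C u‖ := by
        have h2 := hCinner u (C u)
        rw [inner_self_eq_norm_sq_to_K] at h2
        simpa using h2
      have h3 : 0 < ‖C u‖ := norm_pos_iff.mpr h
      nlinarith
  have hBadj : adjoint B * adjoint Bi = 1 := by
    calc adjoint B * adjoint Bi = adjoint (Bi * B) := (adjoint_comp Bi B).symm
      _ = 1 := by rw [hBiB, ← star_eq_adjoint, star_one]
  have hVeq : V = adjoint B * C * A := by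
    have e : adjoint B * C * A = (adjoint B * adjoint Bi) * V * (Ai * A) := by
      simp only [hC, mul_assoc]
    rw [e, hBadj, hAiA, one_mul, mul_one]
  have h1 : (V * T : H →L[ℂ] H) = adjoint B * (C * (A * T)) := by
    rw [hVeq]; simp only [mul_assoc]
  rw [h1]
  have h2 : LinearMap.trace ℂ H ((adjoint B * (C * (A * T)) : H →L[ℂ] H)).toLinearMap
      = LinearMap.trace ℂ H (((C * (A * T)) * adjoint B : H →L[ℂ] H)).toLinearMap :=
    LinearMap.trace_mul_comm ℂ (adjoint B).toLinearMap (C * (A * T)).toLinearMap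
  rw [h2]
  have h3 : ((C * (A * T)) * adjoint B : H →L[ℂ] H) = C * (A * T * adjoint B) := by
    simp only [mul_assoc]
  rw [h3]
  exact key_lemma C (A * T * adjoint B) hCnorm
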